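/- (Local non-constancy) Suppose Θ ⊂ ℝ² is open and connected, x: Θ → [0,1] is a non-constant allocation with the monotonicity property that (α,β) ≥ (α',β') componentwise implies x(α,β) ≥ x(α',β'). Then there exists a point (α^a,β^a) ∈ Θ such that either x(α^a+δ, β^a+δ) > x(α^a,β^a) for all sufficiently small δ > 0, or x(α^a+δ, β^a+δ) < x(α^a,β^a) for all sufficiently small δ < 0. -/
import Mathlib


open Set

/-- Local non-constancy: a non-constant, componentwise monotone allocation
on an open connected set is locally non-constant along the diagonal at some point. -/
theorem stmt12
    (Θ : Set (ℝ × ℝ)) (hΘopen : IsOpen Θ) (hΘconn : IsConnected Θ)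
    (x : ℝ × ℝ → ℝ)
    (hxrange : ∀ θ ∈ Θ, x θ ∈ Icc (0:ℝ) 1)
    (hmono : ∀ θ ∈ Θ, ∀ θ' ∈ Θ, θ'.1 ≤ θ.1 → θ'.2 ≤ θ.2 → x θ' ≤ x θ)
    (hnc : ∃ θ1 ∈ Θ, ∃ θ2 ∈ Θ, x θ1 ≠ x θ2) :
    ∃ θ ∈ Θ,
      (∃ ε > 0, ∀ δ : ℝ, 0 < δ → δ < ε →
        (θ.1 + δ, θ.2 + δ) ∈ Θ ∧ x θ < x (θ.1 + δ, θ.2 + δ)) ∨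
      (∃ ε > 0, ∀ δ : ℝ, -ε < δ → δ < 0 →
        (θ.1 + δ, θ.2 + δ) ∈ Θ ∧ x (θ.1 + δ, θ.2 + δ) < x θ) := by
  by_contra hcon
  push_neg at hcon
  obtain ⟨θ1, hθ1, θ2, hθ2, hne⟩ := hnc
  -- local constancy at every point of Θ
  have key : ∀ θ : ℝ × ℝ, ∃ r : ℝ, θ ∈ Θ →
      0 < r ∧ Metric.ball θ r ⊆ Θ ∧ ∀ p ∈ Metric.ball θ r, x p = x θ := by
    intro θ
    by_cases hθ : θ ∈ Θ
    · obtain ⟨ε, hε, hball⟩ := Metric.isOpen_iff.1 hΘopen θ hθ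
      have hdiag : ∀ δ : ℝ, |δ| < ε → (θ.1 + δ, θ.2 + δ) ∈ Θ := by
        intro δ hδ
        apply hball
        simp [Metric.mem_ball, Prod.dist_eq, Real.dist_eq, abs_of_nonneg, hδ]
      obtain ⟨h1, h2⟩ := hcon θ hθ
      -- positive-side: some δ₊ ∈ (0,ε) with x (θ+δ₊) = x θ
      obtain ⟨δp, hδp0, hδpε, hp⟩ := h1 ε hε
      have hmemp : (θ.1 + δp, θ.2 + δp) ∈ Θ := hdiag δp (by rw [abs_of_pos hδp0]; exact hδpε)
      have hxp : x (θ.1 + δp, θ.2 + δp) = x θ := by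
        have := hp hmemp
        have := hmono (θ.1 + δp, θ.2 + δp) hmemp θ hθ (by simp [le_of_lt hδp0]) (by simp [le_of_lt hδp0])
        linarith [hp hmemp]
      obtain ⟨δn, hδnε, hδn0, hn⟩ := h2 ε hε
      have hmemn : (θ.1 + δn, θ.2 + δn) ∈ Θ := hdiag δn (by rw [abs_of_neg hδn0]; linarith)
      have hxn : x (θ.1 + δn, θ.2 + δn) = x θ := by
        have := hmono θ hθ (θ.1 + δn, θ.2 + δn) hmemn (by simp [le_of_lt hδn0]) (by simp [le_of_lt hδn0])
        linarith [hn hmemn]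
      refine ⟨min δp (-δn), fun _ => ⟨lt_min hδp0 (by linarith), ?_, ?_⟩⟩
      · exact (Metric.ball_subset_ball (le_trans (min_le_left _ _) hδpε.le)).trans hball
      · intro p hp'
        rw [Metric.mem_ball, Prod.dist_eq, Real.dist_eq, Real.dist_eq, max_lt_iff] at hp'
        have h1a : |p.1 - θ.1| < min δp (-δn) := hp'.1
        have h2a : |p.2 - θ.2| < min δp (-δn) := hp'.2
        rw [abs_lt] at h1a h2a
        have hr1 : min δp (-δn) ≤ δp := min_le_left _ _
        have hr2 : min δp (-δn) ≤ -δn := min_le_right _ _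
        have hpΘ : p ∈ Θ := hball (by
          rw [Metric.mem_ball, Prod.dist_eq, Real.dist_eq, Real.dist_eq, max_lt_iff]
          constructor <;> rw [abs_lt] <;> constructor <;> linarith)
        have hle1 : x p ≤ x (θ.1 + δp, θ.2 + δp) :=
          hmono _ hmemp p hpΘ (by simp only []; linarith) (by simp only []; linarith)
        have hle2 : x (θ.1 + δn, θ.2 + δn) ≤ x p :=
          hmono p hpΘ _ hmemn (by simp only []; linarith) (by simp only []; linarith)
        linarith
    · exact ⟨1, fun h => absurd h hθ⟩
  choose r hr using key
  set c := x θ1 with hc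
  set u := ⋃ θ ∈ {θ ∈ Θ | x θ = c}, Metric.ball θ (r θ) with hu
  set v := ⋃ θ ∈ {θ ∈ Θ | x θ ≠ c}, Metric.ball θ (r θ) with hv
  have hou : IsOpen u := isOpen_biUnion fun _ _ => Metric.isOpen_ball
  have hov : IsOpen v := isOpen_biUnion fun _ _ => Metric.isOpen_ball
  have hsub : Θ ⊆ u ∪ v := by
    intro θ hθ
    have hself : θ ∈ Metric.ball θ (r θ) := Metric.mem_ball_self (hr θ hθ).1
    by_cases h : x θ = c
    · exact Or.inl (mem_biUnion ⟨hθ, h⟩ hself)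
    · exact Or.inr (mem_biUnion ⟨hθ, h⟩ hself)
  have hnu : (Θ ∩ u).Nonempty :=
    ⟨θ1, hθ1, mem_biUnion ⟨hθ1, rfl⟩ (Metric.mem_ball_self (hr θ1 hθ1).1)⟩
  have hnv : (Θ ∩ v).Nonempty :=
    ⟨θ2, hθ2, mem_biUnion ⟨hθ2, fun h => hne h.symm⟩ (Metric.mem_ball_self (hr θ2 hθ2).1)⟩
  obtain ⟨p, _, hpu, hpv⟩ := hΘconn.isPreconnected u v hou hov hsub hnu hnv
  obtain ⟨a, ⟨haΘ, hax⟩, hpa⟩ := mem_iUnion₂.1 hpu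
  obtain ⟨b, ⟨hbΘ, hbx⟩, hpb⟩ := mem_iUnion₂.1 hpv
  have e1 : x p = x a := (hr a haΘ).2.2 p hpa
  have e2 : x p = x b := (hr b hbΘ).2.2 p hpb
  exact hbx (by rw [← e2, e1, hax])
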